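/- arXiv:1404.5043 — 2 statements merged into one kernel-verified Lean document; each statement's English description precedes it below -/
import Mathlib

section
/- Let C ⊆ S^q be a convolutional code admitting a polynomial resolution (G_l, ..., G_1) with the PD property, with column degree table (a_l, ..., a_1) and sizes p_l, ..., p_1. Then for every d ≥ 0, the Hilbert function of C satisfies HF(C,d) = dim_F C_{≤d} = Σ_{i=1}^{l} (−1)^{i−1} Σ_{j=1}^{p_i} C(d − a_i(j) + n, n), where C(m,n) denotes the binomial coefficient, taken to be 0 when m < n (i.e., when d − a_i(j) < 0). -/
open MvPolynomial

noncomputable section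
open scoped Classical

/-- Polynomials of total degree at most `d`. -/
def polyDegLE (F : Type) [Field F] (n : ℕ) (d : ℤ) :
    Submodule F (MvPolynomial (Fin n) F) where
  carrier := {f | ∀ m ∈ f.support, ((m.sum fun _ e => e : ℕ) : ℤ) ≤ d}
  add_mem' := fun hf hg m hm =>
    (Finset.mem_union.1 (MvPolynomial.support_add hm)).elim (hf m) (hg m)
  zero_mem' := by simp
  smul_mem' := fun c f hf m hm => hf m (MvPolynomial.support_smul hm)

/-- The filtration `S^p[-a]_{≤ d}`. -/
def filt (F : Type) [Field F] (n p : ℕ) (a : Fin p → ℕ) (d : ℤ) :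
    Submodule F (Fin p → MvPolynomial (Fin n) F) :=
  Submodule.pi Set.univ fun i => polyDegLE F n (d - a i)

/-- `C_{≤d} = C ∩ S^q_{≤d}`, as an `F`-subspace of `S^q`. -/
def codeLE (F : Type) [Field F] (n q : ℕ)
    (C : Submodule (MvPolynomial (Fin n) F) (Fin q → MvPolynomial (Fin n) F))
    (d : ℤ) : Submodule F (Fin q → MvPolynomial (Fin n) F) :=
  (C.restrictScalars F) ⊓ filt F n q (fun _ => 0) d

/-- The `a`-degree of the `j`-th column of a matrix `G` with no zero columns:
`deg_a(G_{·j}) = max_i (a i + deg (G i j))`, the maximum ranging over the nonzero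
entries of the column. -/
def colDeg {F : Type} [Field F] {n p r : ℕ} (a : Fin p → ℕ)
    (G : Matrix (Fin p) (Fin r) (MvPolynomial (Fin n) F)) (j : Fin r) : ℕ :=
  Finset.univ.sup fun i => if G i j = 0 then 0 else a i + (G i j).totalDegree

/-! ### Auxiliary lemmas -/

section Aux

open Module

lemma finite_sumle (n m : ℕ) : Finite {f : Fin n → ℕ // ∑ i, f i ≤ m} := by
  apply Finite.of_injective (fun f => (fun i => (⟨f.1 i, by
    have : f.1 i ≤ ∑ j, f.1 j := Finset.single_le_sum (fun j _ => Nat.zero_le _) (Finset.mem_univ i)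
    omega⟩ : Fin (m+1))) : _ → (Fin n → Fin (m+1)))
  intro f g h
  ext i
  exact congrArg Fin.val (congrFun h i)

lemma card_sumle (n m : ℕ) : Nat.card {f : Fin n → ℕ // ∑ i, f i ≤ m} = (m + n).choose n := by
  induction n generalizing m with
  | zero =>
    haveI : Unique {f : Fin 0 → ℕ // ∑ i, f i ≤ m} :=
      ⟨⟨⟨fun i => i.elim0, by simp⟩⟩, fun f => Subtype.ext (funext fun i => i.elim0)⟩
    simp [Nat.card_unique]
  | succ n ih =>
    have e1 : {f : Fin (n+1) → ℕ // ∑ i, f i ≤ m} ≃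
        Σ k : Fin (m+1), {g : Fin n → ℕ // ∑ i, g i ≤ m - k.1} := by
      refine (Equiv.sigmaFiberEquiv (fun f : {f : Fin (n+1) → ℕ // ∑ i, f i ≤ m} =>
        (⟨f.1 0, by
          have : f.1 0 ≤ ∑ j, f.1 j := Finset.single_le_sum (fun j _ => Nat.zero_le _) (Finset.mem_univ 0)
          omega⟩ : Fin (m+1)))).symm.trans (Equiv.sigmaCongrRight fun k => ?_)
      refine ⟨fun x => ⟨Fin.tail x.1.1, ?_⟩, fun g => ⟨⟨Fin.cons k.1 g.1, ?_⟩, ?_⟩, ?_, ?_⟩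
      · obtain ⟨⟨f, hf⟩, hf0⟩ := x
        have h0 : f 0 = k.1 := congrArg Fin.val hf0
        have := Fin.sum_univ_succ f
        simp only [Fin.tail]
        omega
      · have := Fin.sum_univ_succ (Fin.cons k.1 g.1 : Fin (n+1) → ℕ)
        simp only [Fin.cons_zero, Fin.cons_succ] at this
        have hg := g.2
        have hk : k.1 ≤ m := Nat.lt_succ_iff.1 k.2
        omega
      · exact Fin.ext (by simp)
      · rintro ⟨⟨f, hf⟩, hf0⟩
        have h0 : f 0 = k.1 := congrArg Fin.val hf0
        apply Subtype.ext; apply Subtype.ext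
        simpa [← h0] using Fin.cons_self_tail f
      · rintro ⟨g, hg⟩
        apply Subtype.ext
        simp [Fin.tail_cons]
    have := finite_sumle (n+1) m
    haveI : ∀ k : Fin (m+1), Finite {g : Fin n → ℕ // ∑ i, g i ≤ m - k.1} :=
      fun k => finite_sumle n (m - k.1)
    haveI : ∀ k : Fin (m+1), Fintype {g : Fin n → ℕ // ∑ i, g i ≤ m - k.1} :=
      fun k => Fintype.ofFinite _
    rw [Nat.card_congr e1, Nat.card_eq_fintype_card, Fintype.card_sigma]
    have hcard : ∀ k : Fin (m+1), Fintype.card {g : Fin n → ℕ // ∑ i, g i ≤ m - k.1}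
        = (m - k.1 + n).choose n := fun k => by rw [← Nat.card_eq_fintype_card, ih]
    rw [Finset.sum_congr rfl fun k _ => hcard k,
      Fin.sum_univ_eq_sum_range (fun k => (m - k + n).choose n)]
    have h2 : ∑ i ∈ Finset.range (m+1), (m - i + n).choose n
        = ∑ j ∈ Finset.range (m+1), (j + n).choose n := by
      rw [← Finset.sum_range_reflect (fun j => (j + n).choose n) (m+1)]
      refine Finset.sum_congr rfl fun i hi => ?_
      rw [Finset.mem_range] at hi
      have h' : m + 1 - 1 - i = m - i := by omega
      rw [h']
    have h3 : ∑ j ∈ Finset.range (m+1), (j + n).choose n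
        = ∑ i ∈ Finset.Icc n (n + m), i.choose n := by
      refine Finset.sum_nbij' (fun j => j + n) (fun i => i - n) ?_ ?_ ?_ ?_ ?_
      · intro a ha; rw [Finset.mem_range] at ha; rw [Finset.mem_Icc]; omega
      · intro a ha; rw [Finset.mem_Icc] at ha; rw [Finset.mem_range]; omega
      · intro a ha; omega
      · intro a ha; rw [Finset.mem_Icc] at ha; omega
      · intro a ha; rfl
    rw [h2, h3, Nat.sum_Icc_choose]
    congr 1; omega

variable {F : Type} [Field F] {n : ℕ}

lemma polyDegLE_bot (F : Type) [Field F] (n : ℕ) (d : ℤ) (hd : d < 0) :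
    polyDegLE F n d = ⊥ := by
  ext f
  simp only [Submodule.mem_bot]
  constructor
  · intro h
    by_contra hf
    obtain ⟨m, hm⟩ := (MvPolynomial.support_nonempty.2 hf)
    have := h m hm
    have : (0 : ℤ) ≤ ((m.sum fun _ e => e : ℕ) : ℤ) := Int.natCast_nonneg _
    omega
  · rintro rfl
    exact (polyDegLE F n d).zero_mem

lemma polyDegLE_eq_restrict (F : Type) [Field F] (n m : ℕ) :
    polyDegLE F n (m : ℤ) = restrictTotalDegree (Fin n) F m := by
  ext f
  rw [restrictTotalDegree, restrictSupport, AddMonoidAlgebra.mem_supported]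
  constructor
  · intro h s hs
    have := h s hs
    exact_mod_cast this
  · intro h s hs
    exact_mod_cast h hs

lemma finrank_restrictTotalDegree (F : Type) [Field F] (n m : ℕ) :
    finrank F (restrictTotalDegree (Fin n) F m) = (m + n).choose n := by
  rw [restrictTotalDegree, finrank_eq_nat_card_basis (basisRestrictSupport F _), ← card_sumle n m]
  refine Nat.card_congr (Equiv.subtypeEquiv Finsupp.equivFunOnFinite fun s => ?_)
  have : (s.sum fun _ e => e) = ∑ i, s i := Finsupp.sum_fintype _ _ (fun _ => rfl)
  rw [Set.mem_setOf_eq, this]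
  rfl

instance polyDegLE_fd (F : Type) [Field F] (n : ℕ) (d : ℤ) :
    FiniteDimensional F (polyDegLE F n d) := by
  rcases le_or_gt 0 d with hd | hd
  · have : (d.toNat : ℤ) = d := Int.toNat_of_nonneg hd
    rw [← this, polyDegLE_eq_restrict]
    infer_instance
  · rw [polyDegLE_bot F n d hd]
    infer_instance

lemma finrank_polyDegLE (F : Type) [Field F] (n : ℕ) (d : ℤ) :
    (finrank F (polyDegLE F n d) : ℤ) =
      if 0 ≤ d then (((d.toNat + n).choose n : ℕ) : ℤ) else 0 := by
  rcases le_or_gt 0 d with hd | hd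
  · have h : (d.toNat : ℤ) = d := Int.toNat_of_nonneg hd
    rw [if_pos hd]
    conv_lhs => rw [← h, polyDegLE_eq_restrict, finrank_restrictTotalDegree]
  · rw [if_neg (not_le.2 hd), polyDegLE_bot F n d hd]
    simp

/-- A submodule pi is linearly equivalent to the pi of the submodules. -/
def piSubEquiv {R : Type*} [Semiring R] {ι : Type*} {M : ι → Type*}
    [∀ i, AddCommMonoid (M i)] [∀ i, Module R (M i)] (q : ∀ i, Submodule R (M i)) :
    (Submodule.pi Set.univ q) ≃ₗ[R] (∀ i, q i) where
  toFun x := fun i => ⟨x.1 i, x.2 i (Set.mem_univ i)⟩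
  map_add' _ _ := rfl
  map_smul' _ _ := rfl
  invFun y := ⟨fun i => (y i).1, fun i _ => (y i).2⟩
  left_inv _ := rfl
  right_inv _ := rfl

instance filt_fd (F : Type) [Field F] (n p : ℕ) (a : Fin p → ℕ) (d : ℤ) :
    FiniteDimensional F (filt F n p a d) :=
  Module.Finite.equiv (piSubEquiv _).symm

lemma finrank_filt (F : Type) [Field F] (n p : ℕ) (a : Fin p → ℕ) (d : ℤ) :
    (finrank F (filt F n p a d) : ℤ) =
      ∑ j : Fin p, if (a j : ℤ) ≤ d then ((((d - a j).toNat + n).choose n : ℕ) : ℤ) else 0 := by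
  rw [filt, (piSubEquiv _).finrank_eq, finrank_pi_fintype]
  push_cast [Finset.sum_congr]
  refine Finset.sum_congr rfl fun j _ => ?_
  rw [finrank_polyDegLE]
  congr 1
  simp [sub_nonneg]

lemma mem_polyDegLE_iff {f : MvPolynomial (Fin n) F} {d : ℤ} :
    f ∈ polyDegLE F n d ↔ f = 0 ∨ ((f.totalDegree : ℕ) : ℤ) ≤ d := by
  constructor
  · intro h
    by_cases hf : f = 0
    · exact Or.inl hf
    · refine Or.inr ?_
      obtain ⟨m, hm, hsup⟩ := f.support.exists_mem_eq_sup
        (MvPolynomial.support_nonempty.2 hf) fun m => m.sum fun _ e => e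
      rw [totalDegree, hsup]
      exact h m hm
  · rintro (rfl | h)
    · exact (polyDegLE F n d).zero_mem
    · intro m hm
      exact le_trans (Nat.cast_le.2 (le_totalDegree hm)) h

lemma polyDegLE_mono {d d' : ℤ} (h : d ≤ d') : polyDegLE F n d ≤ polyDegLE F n d' :=
  fun f hf m hm => le_trans (hf m hm) h

lemma mul_mem_polyDegLE {g h : MvPolynomial (Fin n) F} {c e : ℤ}
    (hg : g ∈ polyDegLE F n e) (hdeg : ((h.totalDegree : ℕ) : ℤ) ≤ c) :
    h * g ∈ polyDegLE F n (c + e) := by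
  rcases mem_polyDegLE_iff.1 hg with rfl | hge
  · rw [mul_zero]; exact Submodule.zero_mem _
  · refine mem_polyDegLE_iff.2 ?_
    by_cases hz : h * g = 0
    · exact Or.inl hz
    · refine Or.inr ?_
      calc (((h * g).totalDegree : ℕ) : ℤ) ≤ ((h.totalDegree + g.totalDegree : ℕ) : ℤ) :=
            Nat.cast_le.2 (totalDegree_mul h g)
        _ ≤ c + e := by push_cast; omega

lemma mulVec_mem_filt {p r : ℕ} (a : Fin p → ℕ) (b : Fin r → ℕ)
    (G : Matrix (Fin p) (Fin r) (MvPolynomial (Fin n) F))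
    (hG : ∀ i j, G i j ≠ 0 → a i + (G i j).totalDegree ≤ b j) (d : ℤ)
    (f : Fin r → MvPolynomial (Fin n) F) (hf : f ∈ filt F n r b d) :
    G.mulVec f ∈ filt F n p a d := by
  intro i _
  show G.mulVec f i ∈ polyDegLE F n (d - a i)
  rw [Matrix.mulVec, dotProduct]
  apply Submodule.sum_mem
  intro j _
  by_cases hGij : G i j = 0
  · rw [hGij, zero_mul]; exact Submodule.zero_mem _
  · have h1 : f j ∈ polyDegLE F n (d - b j) := hf j (Set.mem_univ j)
    have h2 : (((G i j).totalDegree : ℕ) : ℤ) ≤ (b j : ℤ) - a i := by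
      have := hG i j hGij; push_cast; omega
    have h3 := mul_mem_polyDegLE h1 h2
    exact polyDegLE_mono (le_of_eq (by ring)) h3

lemma finrank_eq_add_of_exact {V W : Type} [AddCommGroup V] [Module F V]
    [AddCommGroup W] [Module F W]
    (W' : Submodule F V) (U : Submodule F W) [FiniteDimensional F W'] [FiniteDimensional F U]
    (M : V →ₗ[F] W) (hmap : ∀ x ∈ W', M x ∈ U) (hs : ∀ u ∈ U, ∃ x ∈ W', M x = u) :
    finrank F W' = finrank F (W' ⊓ LinearMap.ker M : Submodule F V) + finrank F U := by
  let φ : W' →ₗ[F] U := (M.domRestrict W').codRestrict U (fun x => hmap x.1 x.2)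
  have hφs : Function.Surjective φ := by
    rintro ⟨u, hu⟩
    obtain ⟨x, hx, hMx⟩ := hs u hu
    exact ⟨⟨x, hx⟩, Subtype.ext hMx⟩
  have h1 : finrank F (LinearMap.range φ) + finrank F (LinearMap.ker φ) = finrank F W' :=
    LinearMap.finrank_range_add_finrank_ker φ
  have h2 : LinearMap.range φ = ⊤ := LinearMap.range_eq_top.2 hφs
  have h3 : LinearMap.ker φ = Submodule.comap W'.subtype (W' ⊓ LinearMap.ker M) := by
    ext x
    simp only [LinearMap.mem_ker, Submodule.mem_comap, Submodule.coe_subtype,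
      Submodule.mem_inf, φ]
    constructor
    · intro h
      refine ⟨x.2, ?_⟩
      have := congrArg Subtype.val h
      exact this
    · intro h
      apply Subtype.ext
      exact h.2
  rw [h2] at h1
  rw [show finrank F (⊤ : Submodule F U) = finrank F U from finrank_top F _] at h1
  rw [h3] at h1
  rw [LinearEquiv.finrank_eq
    (Submodule.comapSubtypeEquivOfLe (inf_le_left : W' ⊓ LinearMap.ker M ≤ W'))] at h1
  omega

end Aux

/-- Hilbert function of a code from a PD resolution.  Let
`(G_l, …, G_1)` be a polynomial complex (here `G i` is the matrix `G_{i+1}`, of size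
`p i × p (i+1)`, with `p 0 = q`), with no zero columns, whose column degree table
`(a_l, …, a_1)` is defined recursively by `a_0 = 0`, `a_{i+1} = deg_{a_i}(G_{i+1})`.
Assume it has the PD property, i.e. for every `d ≥ 0` the sequence
`0 → S^{p_l}[-a_l]_{≤d} → ⋯ → S^{p_1}[-a_1]_{≤d} → C_{≤d} → 0` is exact.  Then
`HF(C,d) = dim_F C_{≤d} = Σ_{i=1}^{l} (−1)^{i−1} Σ_j C(d − a_i(j) + n, n)`,
the binomial coefficient being `0` when `d − a_i(j) < 0`. -/
theorem hilbert_function_formula (F : Type) [Field F] (n : ℕ)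
    (l : ℕ) (hl : 1 ≤ l) (p : ℕ → ℕ)
    (G : ∀ i : ℕ, Matrix (Fin (p i)) (Fin (p (i+1))) (MvPolynomial (Fin n) F))
    (a : ∀ i : ℕ, Fin (p i) → ℕ)
    (ha0 : ∀ j, a 0 j = 0)
    (harec : ∀ i, i + 1 ≤ l → ∀ j, a (i+1) j = colDeg (a i) (G i) j)
    (hnz : ∀ i, i + 1 ≤ l → ∀ j, ∃ r, G i r j ≠ 0)
    (hcomplex : ∀ i, i + 2 ≤ l → ∀ y, (G i).mulVec ((G (i+1)).mulVec y) = 0)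
    (C : Submodule (MvPolynomial (Fin n) F) (Fin (p 0) → MvPolynomial (Fin n) F))
    (hC : LinearMap.range (G 0).mulVecLin = C)
    (hsurj : ∀ d : ℕ, ∀ c ∈ codeLE F n (p 0) C (d : ℤ),
      ∃ f ∈ filt F n (p 1) (a 1) (d : ℤ), (G 0).mulVec f = c)
    (hmid : ∀ d : ℕ, ∀ i, i + 2 ≤ l → ∀ f ∈ filt F n (p (i+1)) (a (i+1)) (d : ℤ),
      (G i).mulVec f = 0 →
        ∃ y ∈ filt F n (p (i+2)) (a (i+2)) (d : ℤ), (G (i+1)).mulVec y = f)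
    (hinj : ∀ d : ℕ, ∀ i, i + 1 = l → ∀ f ∈ filt F n (p (i+1)) (a (i+1)) (d : ℤ),
      (G i).mulVec f = 0 → f = 0) :
    ∀ d : ℕ,
      (Module.finrank F (codeLE F n (p 0) C (d : ℤ)) : ℤ) =
        ∑ i ∈ Finset.range l, (-1) ^ i *
          ∑ j : Fin (p (i+1)),
            if a (i+1) j ≤ d then ((d - a (i+1) j + n).choose n : ℤ) else 0 := by
  intro d
  -- degree bounds for the matrices
  have hGdeg : ∀ i, i + 1 ≤ l → ∀ r j, G i r j ≠ 0 →
      a i r + (G i r j).totalDegree ≤ a (i+1) j := by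
    intro i hi r j hne
    rw [harec i hi j]
    unfold colDeg
    have h := Finset.le_sup (f := fun r => if G i r j = 0 then 0 else a i r + (G i r j).totalDegree)
      (Finset.mem_univ r)
    replace h : (if G i r j = 0 then 0 else a i r + (G i r j).totalDegree) ≤ _ := h
    rwa [if_neg hne] at h
  -- finite-dimensionality of the kernels
  haveI hKfd : ∀ i, FiniteDimensional F
      ((filt F n (p (i+1)) (a (i+1)) (d : ℤ) ⊓
        LinearMap.ker (((G i).mulVecLin).restrictScalars F)) :
        Submodule F (Fin (p (i+1)) → MvPolynomial (Fin n) F)) := fun i =>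
    Submodule.finiteDimensional_of_le inf_le_left
  haveI hCfd : FiniteDimensional F (codeLE F n (p 0) C (d : ℤ)) :=
    Submodule.finiteDimensional_of_le
      (inf_le_right : codeLE F n (p 0) C (d : ℤ) ≤ filt F n (p 0) (fun _ => 0) (d : ℤ))
  -- step formula
  have key : ∀ i, i + 2 ≤ l →
      Module.finrank F (filt F n (p (i+2)) (a (i+2)) (d : ℤ)) =
      Module.finrank F ((filt F n (p (i+2)) (a (i+2)) (d : ℤ) ⊓
        LinearMap.ker (((G (i+1)).mulVecLin).restrictScalars F)) :
        Submodule F (Fin (p (i+2)) → MvPolynomial (Fin n) F)) +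
      Module.finrank F ((filt F n (p (i+1)) (a (i+1)) (d : ℤ) ⊓
        LinearMap.ker (((G i).mulVecLin).restrictScalars F)) :
        Submodule F (Fin (p (i+1)) → MvPolynomial (Fin n) F)) := by
    intro i hi
    refine finrank_eq_add_of_exact _ _ _ ?_ ?_
    · intro x hx
      rw [Submodule.mem_inf]
      constructor
      · show (G (i+1)).mulVecLin x ∈ _
        rw [Matrix.mulVecLin_apply]
        exact mulVec_mem_filt (a (i+1)) (a (i+2)) (G (i+1)) (hGdeg (i+1) (by omega)) _ x hx
      · rw [LinearMap.mem_ker]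
        show (G i).mulVecLin ((G (i+1)).mulVecLin x) = 0
        rw [Matrix.mulVecLin_apply, Matrix.mulVecLin_apply]
        exact hcomplex i hi x
    · intro u hu
      rw [Submodule.mem_inf] at hu
      have hker : (G i).mulVec u = 0 := by
        have := hu.2
        rw [LinearMap.mem_ker] at this
        simpa using this
      obtain ⟨y, hy, hGy⟩ := hmid d i hi u hu.1 hker
      exact ⟨y, hy, by simpa using hGy⟩
  -- base formula
  have base : Module.finrank F (filt F n (p 1) (a 1) (d : ℤ)) =
      Module.finrank F ((filt F n (p 1) (a 1) (d : ℤ) ⊓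
        LinearMap.ker (((G 0).mulVecLin).restrictScalars F)) :
        Submodule F (Fin (p 1) → MvPolynomial (Fin n) F)) +
      Module.finrank F (codeLE F n (p 0) C (d : ℤ)) := by
    refine finrank_eq_add_of_exact _ _ _ ?_ ?_
    · intro x hx
      rw [codeLE, Submodule.mem_inf]
      constructor
      · rw [Submodule.restrictScalars_mem, ← hC]
        exact ⟨x, rfl⟩
      · show (G 0).mulVecLin x ∈ _
        rw [Matrix.mulVecLin_apply]
        refine mulVec_mem_filt (fun _ => 0) (a 1) (G 0) ?_ _ x hx
        intro r j hne
        have := hGdeg 0 hl r j hne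
        rw [ha0 r] at this
        simpa using this
    · intro u hu
      obtain ⟨f, hf, hGf⟩ := hsurj d u hu
      exact ⟨f, hf, by simpa using hGf⟩
  -- the last kernel is zero
  have hlast : (filt F n (p (l-1+1)) (a (l-1+1)) (d : ℤ) ⊓
      LinearMap.ker (((G (l-1)).mulVecLin).restrictScalars F) :
      Submodule F (Fin (p (l-1+1)) → MvPolynomial (Fin n) F)) = ⊥ := by
    ext x
    rw [Submodule.mem_inf, Submodule.mem_bot]
    constructor
    · rintro ⟨h1, h2⟩
      refine hinj d (l-1) (by omega) x h1 ?_
      rw [LinearMap.mem_ker] at h2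
      simpa using h2
    · rintro rfl
      exact ⟨Submodule.zero_mem _, Submodule.zero_mem _⟩
  -- abbreviations for the integer dimensions
  set Wz : ℕ → ℤ := fun i => (Module.finrank F (filt F n (p (i+1)) (a (i+1)) (d : ℤ)) : ℤ)
    with hWzdef
  set Kz : ℕ → ℤ := fun i => (Module.finrank F ((filt F n (p (i+1)) (a (i+1)) (d : ℤ) ⊓
      LinearMap.ker (((G i).mulVecLin).restrictScalars F)) :
      Submodule F (Fin (p (i+1)) → MvPolynomial (Fin n) F)) : ℤ) with hKzdef
  have keyz : ∀ i, i + 2 ≤ l → Wz (i+1) = Kz (i+1) + Kz i := by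
    intro i hi
    have h := key i hi
    simp only [hWzdef, hKzdef]
    exact_mod_cast h
  have hlastz : Kz (l-1) = 0 := by
    simp only [hKzdef]
    rw [hlast]
    simp
  have basez : Wz 0 = Kz 0 + (Module.finrank F (codeLE F n (p 0) C (d : ℤ)) : ℤ) := by
    simp only [hWzdef, hKzdef]
    exact_mod_cast base
  -- downward induction on the kernels
  have claim : ∀ j, j ≤ l - 1 → Kz (l-1-j) = ∑ t ∈ Finset.range j, (-1 : ℤ) ^ t * Wz (l-j+t) := by
    intro j
    induction j with
    | zero =>
      intro _
      rw [Nat.sub_zero, hlastz]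
      simp
    | succ j ih =>
      intro hj
      have e0 : l - 1 - (j+1) = l - j - 2 := by omega
      have e1 : l - 1 - j = (l - j - 2) + 1 := by omega
      have hs := keyz (l - j - 2) (by omega)
      have ihe := ih (by omega)
      rw [e1] at ihe
      rw [e0, Finset.sum_range_succ']
      have hterm : ∀ t ∈ Finset.range j,
          (-1 : ℤ) ^ (t+1) * Wz (l-(j+1)+(t+1)) = -((-1 : ℤ) ^ t * Wz (l-j+t)) := by
        intro t _
        have h' : l - (j+1) + (t+1) = l - j + t := by omega
        rw [h', pow_succ]
        ring
      rw [Finset.sum_congr rfl hterm, Finset.sum_neg_distrib]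
      have h0 : l - (j+1) + 0 = (l - j - 2) + 1 := by omega
      rw [h0, ← ihe]
      simp only [pow_zero, one_mul]
      omega
  -- value of filt dimensions
  have hWval : ∀ i : ℕ, Wz i =
      ∑ j : Fin (p (i+1)),
        if a (i+1) j ≤ d then ((d - a (i+1) j + n).choose n : ℤ) else 0 := by
    intro i
    simp only [hWzdef]
    rw [finrank_filt]
    refine Finset.sum_congr rfl fun j _ => ?_
    by_cases hj : a (i+1) j ≤ d
    · rw [if_pos hj, if_pos (by exact_mod_cast hj)]
      have h' : ((d : ℤ) - (a (i+1) j : ℤ)).toNat = d - a (i+1) j := by omega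
      rw [h']
    · rw [if_neg hj, if_neg (by exact_mod_cast hj)]
  -- put everything together
  have hcz := claim (l-1) le_rfl
  rw [show l - 1 - (l-1) = 0 from by omega] at hcz
  have hcz' : Kz 0 = ∑ t ∈ Finset.range (l-1), (-1 : ℤ) ^ t * Wz (t+1) := by
    rw [hcz]
    refine Finset.sum_congr rfl fun t ht => ?_
    rw [Finset.mem_range] at ht
    rw [show l - (l-1) + t = t + 1 from by omega]
  have hgoal : ∑ i ∈ Finset.range l, (-1 : ℤ) ^ i *
      ∑ j : Fin (p (i+1)),
        (if a (i+1) j ≤ d then ((d - a (i+1) j + n).choose n : ℤ) else 0) =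
      ∑ i ∈ Finset.range l, (-1 : ℤ) ^ i * Wz i :=
    Finset.sum_congr rfl fun i _ => by rw [hWval i]
  rw [hgoal, show l = (l - 1) + 1 from by omega, Finset.sum_range_succ']
  have hterm : ∀ t ∈ Finset.range (l-1),
      (-1 : ℤ) ^ (t+1) * Wz (t+1) = -((-1 : ℤ) ^ t * Wz (t+1)) := by
    intro t _
    rw [pow_succ]
    ring
  rw [Finset.sum_congr rfl hterm, Finset.sum_neg_distrib, ← hcz']
  simp only [pow_zero, one_mul]
  omega
end
end

section
/- Let S = F[D] (one variable), G ∈ S^{q×p} a matrix of full column rank p with column degree function a, and suppose the leading coefficient matrix of G has full column rank. Then for every d ≥ 0, the map f ↦ Gf is an F-linear bijection from S^p[-a]_{≤d} = { f ∈ S^p : a(j) + deg f_j ≤ d for all j } onto C_{≤d} = Im(G) ∩ S^q_{≤d}. -/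
noncomputable section

/-- The column degree function of a univariate polynomial matrix `G`:
`a j = max_i deg (G i j)`. -/
def colDeg1 {F : Type} [Field F] {q p : ℕ}
    (G : Matrix (Fin q) (Fin p) (Polynomial F)) (j : Fin p) : ℕ :=
  Finset.univ.sup fun i => (G i j).natDegree

/-- The leading coefficient matrix of `G`. -/
def leadCoeffMatrix {F : Type} [Field F] {q p : ℕ}
    (G : Matrix (Fin q) (Fin p) (Polynomial F)) : Matrix (Fin q) (Fin p) F :=
  fun i j => (G i j).coeff (colDeg1 G j)

private lemma natDegree_le_colDeg1 {F : Type} [Field F] {q p : ℕ}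
    (G : Matrix (Fin q) (Fin p) (Polynomial F)) (i : Fin q) (j : Fin p) :
    (G i j).natDegree ≤ colDeg1 G j := by
  unfold colDeg1
  exact Finset.le_sup (f := fun i => (G i j).natDegree) (Finset.mem_univ i)

private lemma key_coeff {F : Type} [Field F] (u v : Polynomial F) (A M : ℕ)
    (hA : A ≤ M) (hu : u.natDegree ≤ A) (hv : (A : WithBot ℕ) + v.degree ≤ (M : WithBot ℕ)) :
    (u * v).coeff M = u.coeff A * v.coeff (M - A) := by
  rcases eq_or_ne v 0 with rfl | hv0
  · simp
  · have hdeg : A + v.natDegree ≤ M := by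
      have := hv
      rw [Polynomial.degree_eq_natDegree hv0] at this
      exact_mod_cast (by exact_mod_cast this : ((A + v.natDegree : ℕ) : WithBot ℕ) ≤ (M : WithBot ℕ))
    rw [Polynomial.coeff_mul]
    refine Finset.sum_eq_single_of_mem (A, M - A)
      (Finset.HasAntidiagonal.mem_antidiagonal.mpr (by omega)) ?_
    rintro ⟨x, y⟩ hxy hne
    rw [Finset.HasAntidiagonal.mem_antidiagonal] at hxy
    rcases lt_trichotomy x A with hx | hx | hx
    · have hy : v.natDegree < y := by omega
      rw [Polynomial.coeff_eq_zero_of_natDegree_lt hy, mul_zero]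
    · exfalso; apply hne; subst hx; simp [Prod.ext_iff]; omega
    · have hux : u.natDegree < x := lt_of_le_of_lt hu hx
      rw [Polynomial.coeff_eq_zero_of_natDegree_lt hux, zero_mul]

/-- let `S = F[D]`, `G ∈ S^{q×p}` a matrix of full column rank with
column degree function `a`, whose leading coefficient matrix has full column rank.
Then for every `d ≥ 0`, `f ↦ G f` is a bijection from
`S^p[-a]_{≤d} = { f : a j + deg f_j ≤ d ∀j }` onto `C_{≤d} = Im(G) ∩ S^q_{≤d}`
(degrees in `WithBot ℕ`, so the zero polynomial satisfies every bound). -/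
theorem reduced_matrix_level_bijection (F : Type) [Field F] (q p : ℕ)
    (G : Matrix (Fin q) (Fin p) (Polynomial F))
    (hnz : ∀ j, ∃ i, G i j ≠ 0)
    (hfc : Function.Injective (G.mulVec : (Fin p → Polynomial F) → Fin q → Polynomial F))
    (hlc : Function.Injective ((leadCoeffMatrix G).mulVec : (Fin p → F) → Fin q → F)) :
    ∀ d : ℕ,
      Set.BijOn G.mulVec
        {f : Fin p → Polynomial F |
          ∀ j, ((colDeg1 G j : ℕ) : WithBot ℕ) + (f j).degree ≤ (d : WithBot ℕ)}
        {g : Fin q → Polynomial F |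
          (∃ f, G.mulVec f = g) ∧ ∀ i, (g i).degree ≤ (d : WithBot ℕ)} := by
  intro d
  have hmaps : ∀ f : Fin p → Polynomial F,
      (∀ j, ((colDeg1 G j : ℕ) : WithBot ℕ) + (f j).degree ≤ (d : WithBot ℕ)) →
      ∀ i, ((G.mulVec f) i).degree ≤ (d : WithBot ℕ) := by
    intro f hf i
    have heq : (G.mulVec f) i = ∑ j, G i j * f j := rfl
    rw [heq]
    refine le_trans (Polynomial.degree_sum_le _ _) ?_
    refine Finset.sup_le fun j _ => ?_
    have h1 : (G i j).degree ≤ ((colDeg1 G j : ℕ) : WithBot ℕ) := by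
      refine le_trans Polynomial.degree_le_natDegree ?_
      exact_mod_cast natDegree_le_colDeg1 G i j
    calc (G i j * f j).degree ≤ (G i j).degree + (f j).degree := Polynomial.degree_mul_le _ _
      _ ≤ ((colDeg1 G j : ℕ) : WithBot ℕ) + (f j).degree := add_le_add_left h1 _
      _ ≤ (d : WithBot ℕ) := hf j
  -- key degree-control claim
  have hkey : ∀ f : Fin p → Polynomial F,
      (∀ i, ((G.mulVec f) i).degree ≤ (d : WithBot ℕ)) →
      ∀ j, ((colDeg1 G j : ℕ) : WithBot ℕ) + (f j).degree ≤ (d : WithBot ℕ) := by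
    intro f hgf j
    classical
    by_contra hcon
    push_neg at hcon
    have hfj0 : f j ≠ 0 := by
      intro h; rw [h] at hcon; simp at hcon
    set s : Finset (Fin p) := Finset.univ.filter (fun j => f j ≠ 0) with hs
    have hjs : j ∈ s := by simp [hs, hfj0]
    set N : ℕ := s.sup (fun j => colDeg1 G j + (f j).natDegree) with hN
    have hNj : colDeg1 G j + (f j).natDegree ≤ N :=
      Finset.le_sup (f := fun j => colDeg1 G j + (f j).natDegree) hjs
    have hdN : d < N := by
      have : (d : WithBot ℕ) < ((colDeg1 G j : ℕ) : WithBot ℕ) + (f j).degree := hcon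
      rw [Polynomial.degree_eq_natDegree hfj0] at this
      have : (d : WithBot ℕ) < ((colDeg1 G j + (f j).natDegree : ℕ) : WithBot ℕ) := by
        exact_mod_cast this
      have := (Nat.cast_lt (α := WithBot ℕ)).1 this
      omega
    set c : Fin p → F := fun j => (f j).coeff (N - colDeg1 G j) with hc
    have hcoeff : ∀ i, ((leadCoeffMatrix G).mulVec c) i = 0 := by
      intro i
      have h1 : ((G.mulVec f) i).coeff N = 0 := by
        apply Polynomial.coeff_eq_zero_of_degree_lt
        exact lt_of_le_of_lt (hgf i) (by exact_mod_cast hdN)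
      have h2 : ((G.mulVec f) i).coeff N = ((leadCoeffMatrix G).mulVec c) i := by
        have : (G.mulVec f) i = ∑ k, G i k * f k := rfl
        rw [this, Polynomial.finset_sum_coeff]
        have : ((leadCoeffMatrix G).mulVec c) i = ∑ k, (G i k).coeff (colDeg1 G k) * c k := rfl
        rw [this]
        refine Finset.sum_congr rfl fun k _ => ?_
        rcases eq_or_ne (f k) 0 with hk0 | hk0
        · simp [hk0, hc]
        · have hks : k ∈ s := by simp [hs, hk0]
          have hkN : colDeg1 G k + (f k).natDegree ≤ N :=
            Finset.le_sup (f := fun j => colDeg1 G j + (f j).natDegree) hks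
          refine key_coeff _ _ _ _ (by omega) (natDegree_le_colDeg1 G i k) ?_
          rw [Polynomial.degree_eq_natDegree hk0]
          exact_mod_cast hkN
      rw [← h2, h1]
    have hc0 : c = 0 := by
      apply hlc
      funext i
      simp [hcoeff i, Matrix.mulVec_zero]
    -- pick a column attaining the sup
    obtain ⟨j1, hj1s, hj1⟩ := Finset.exists_mem_eq_sup s ⟨j, hjs⟩
      (fun j => colDeg1 G j + (f j).natDegree)
    have hfj1 : f j1 ≠ 0 := by
      have := hj1s; simp [hs] at this; exact this
    have hNj1 : N = colDeg1 G j1 + (f j1).natDegree := by rw [hN, hj1]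
    have hcj1 : c j1 = (f j1).leadingCoeff := by
      show (f j1).coeff (N - colDeg1 G j1) = _
      have h3 : N - colDeg1 G j1 = (f j1).natDegree := by omega
      rw [h3, Polynomial.leadingCoeff]
    have hl0 : (f j1).leadingCoeff = 0 := by rw [← hcj1, hc0]; rfl
    exact hfj1 (Polynomial.leadingCoeff_eq_zero.mp hl0)
  refine ⟨?_, ?_, ?_⟩
  · intro f hf
    exact ⟨⟨f, rfl⟩, hmaps f hf⟩
  · exact hfc.injOn
  · rintro g ⟨⟨f, rfl⟩, hg⟩
    exact ⟨f, hkey f hg, rfl⟩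
end
end
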